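/- Let Θ be a measurable space, K ≥ 1, let μ_pr be a probability measure on Θ and μ_pr^K its K-fold product. Let π_1,…,π_K : Θ → [0,∞) be measurable with ∫ π_k dμ_pr = 1, let S_K be a nonempty finite set of permutations of {1,…,K}, for σ ∈ S_K let μ_σ be the probability measure on Θ^K with density π_σ(θ) := ∏_{k=1}^K π_{σ(k)}(θ_k) with respect to μ_pr^K, and let μ_W be the probability measure with density π_W := (1/|S_K|) Σ_{σ∈S_K} π_σ. Assume the minimal pairwise overlap Λ_m := min_{σ,ρ∈S_K} ∫ min(π_σ(θ), π_ρ(θ)) μ_pr^K(dθ) is positive. Then for every f ∈ L2(Θ^K, μ_W) with ∫ f dμ_W = 0, one has (Λ_m/(2 − Λ_m)) · Var_{μ_W}(f) ≤ (1/|S_K|) Σ_{σ∈S_K} Var_{μ_σ}(f). -/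

import Mathlib

open MeasureTheory ProbabilityTheory ENNReal

lemma lintegral_pi_prod_aux {ι : Type*} [Fintype ι] [DecidableEq ι]
    {α : ι → Type*} [∀ i, MeasurableSpace (α i)] [Nonempty (∀ i, α i)]
    (μ : ∀ i, Measure (α i)) [∀ i, SigmaFinite (μ i)]
    (g : ∀ i, α i → ℝ≥0∞) (hg : ∀ i, Measurable (g i)) :
    ∫⁻ x, ∏ i, g i (x i) ∂Measure.pi μ = ∏ i, ∫⁻ y, g i y ∂μ i := by
  have hF : Measurable fun x : ∀ i, α i => ∏ i, g i (x i) :=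
    Finset.measurable_prod _ fun i _ => (hg i).comp (measurable_pi_apply i)
  have key : ∀ s : Finset ι, ∀ x : ∀ i, α i,
      (∫⋯∫⁻_s, (fun x => ∏ i, g i (x i)) ∂μ) x
        = (∏ i ∈ s, ∫⁻ y, g i y ∂μ i) * ∏ i ∈ sᶜ, g i (x i) := by
    intro s
    induction s using Finset.induction with
    | empty => intro x; simp
    | insert i s hi ih =>
      intro x
      rw [lmarginal_insert _ hF hi]
      have hmem : i ∈ sᶜ := Finset.mem_compl.mpr hi
      have step : ∀ xᵢ : α i,
          (∫⋯∫⁻_s, (fun x => ∏ i, g i (x i)) ∂μ) (Function.update x i xᵢ)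
            = ((∏ j ∈ s, ∫⁻ y, g j y ∂μ j) * ∏ j ∈ sᶜ.erase i, g j (x j)) * g i xᵢ := by
        intro xᵢ
        rw [ih]
        rw [← Finset.mul_prod_erase _ _ hmem, Function.update_self]
        have : ∏ j ∈ sᶜ.erase i, g j (Function.update x i xᵢ j)
            = ∏ j ∈ sᶜ.erase i, g j (x j) :=
          Finset.prod_congr rfl fun j hj => by
            rw [Function.update_of_ne (Finset.ne_of_mem_erase hj)]
        rw [this]; ring
      simp_rw [step]
      rw [lintegral_const_mul _ (hg i), Finset.prod_insert hi, Finset.compl_insert]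
      ring
  have x0 : ∀ i, α i := Classical.arbitrary _
  rw [lintegral_eq_lmarginal_univ x0, key, Finset.compl_univ]
  simp

lemma sq_integral_le_aux {α : Type*} [MeasurableSpace α] {ν : Measure α} [IsFiniteMeasure ν]
    {g : α → ℝ} (hgi : Integrable g ν) (hg2 : Integrable (fun x => g x ^ 2) ν) :
    (∫ x, g x ∂ν) ^ 2 ≤ (ν Set.univ).toReal * ∫ x, g x ^ 2 ∂ν := by
  set M : ℝ := (ν Set.univ).toReal with hM
  have hM0 : 0 ≤ M := ENNReal.toReal_nonneg
  rcases eq_or_lt_of_le hM0 with hMz | hMpos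
  · have : ν Set.univ = 0 := by
      have := (ENNReal.toReal_eq_zero_iff _).mp hMz.symm
      rcases this with h | h
      · exact h
      · exact absurd h (measure_ne_top ν _)
    have hν : ν = 0 := Measure.measure_univ_eq_zero.mp this
    simp [hν]
  · set I : ℝ := ∫ x, g x ∂ν with hI
    set c : ℝ := I / M with hc
    have hcM : c * M = I := div_mul_cancel₀ I (ne_of_gt hMpos)
    have h0 : 0 ≤ ∫ x, (g x - c) ^ 2 ∂ν := integral_nonneg fun x => sq_nonneg _
    have expand : ∫ x, (g x - c) ^ 2 ∂ν
        = ∫ x, g x ^ 2 ∂ν - 2 * c * I + c ^ 2 * M := by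
      have h1 : ∀ x, (g x - c) ^ 2 = (g x ^ 2 - 2 * c * g x) + c ^ 2 := fun x => by ring
      simp_rw [h1]
      have hint : Integrable (fun x => g x ^ 2 - 2 * c * g x) ν :=
        hg2.sub (hgi.const_mul (2 * c))
      rw [integral_add hint (integrable_const _),
        integral_sub hg2 (hgi.const_mul (2 * c)), integral_const_mul, integral_const]
      simp [smul_eq_mul, hM, hI, measureReal_def]
      ring
    rw [expand] at h0
    nlinarith [mul_nonneg hM0 h0, hcM, sq_nonneg (c * M - I)]

lemma sq_sub_le_aux (a b : ℝ) : (a - b) ^ 2 ≤ 2 * a ^ 2 + 2 * b ^ 2 := by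
  nlinarith [sq_nonneg (a + b)]

set_option maxHeartbeats 1000000 in
lemma pair_bound_aux {α : Type*} [MeasurableSpace α] {μ₁ μ₂ κ ν₁ ν₂ : Measure α}
    [IsProbabilityMeasure μ₁] [IsProbabilityMeasure μ₂]
    (h1 : μ₁ = κ + ν₁) (h2 : μ₂ = κ + ν₂)
    {f : α → ℝ} (hf1 : MemLp f 2 μ₁) (hf2 : MemLp f 2 μ₂)
    {lam : ℝ} (hlam : lam = (κ Set.univ).toReal) :
    lam * (∫ x, f x ∂μ₁ - ∫ x, f x ∂μ₂) ^ 2 ≤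
      2 * (1 - lam) * ((∫ x, f x ^ 2 ∂μ₁ - (∫ x, f x ∂μ₁) ^ 2)
        + (∫ x, f x ^ 2 ∂μ₂ - (∫ x, f x ∂μ₂) ^ 2)) := by
  have hκ1 : κ ≤ μ₁ := h1 ▸ Measure.le_add_right le_rfl
  have hν1 : ν₁ ≤ μ₁ := h1 ▸ Measure.le_add_left le_rfl
  have hν2 : ν₂ ≤ μ₂ := h2 ▸ Measure.le_add_left le_rfl
  haveI : IsFiniteMeasure κ := isFiniteMeasure_of_le μ₁ hκ1
  haveI : IsFiniteMeasure ν₁ := isFiniteMeasure_of_le μ₁ hν1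
  haveI : IsFiniteMeasure ν₂ := isFiniteMeasure_of_le μ₂ hν2
  set m₁ : ℝ := ∫ x, f x ∂μ₁ with hm₁
  set m₂ : ℝ := ∫ x, f x ∂μ₂ with hm₂
  set c : ℝ := (m₁ + m₂) / 2 with hcdef
  set g : α → ℝ := fun x => f x - c with hgdef
  have hg1 : MemLp g 2 μ₁ := hf1.sub (memLp_const c)
  have hg2 : MemLp g 2 μ₂ := hf2.sub (memLp_const c)
  have ig1 : Integrable g μ₁ := hg1.integrable one_le_two
  have ig2 : Integrable g μ₂ := hg2.integrable one_le_two
  have isq1 : Integrable (fun x => g x ^ 2) μ₁ := hg1.integrable_sq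
  have isq2 : Integrable (fun x => g x ^ 2) μ₂ := hg2.integrable_sq
  have if1 : Integrable f μ₁ := hf1.integrable one_le_two
  have if2 : Integrable f μ₂ := hf2.integrable one_le_two
  -- masses
  have hlamnn : 0 ≤ lam := hlam ▸ ENNReal.toReal_nonneg
  set lam1 : ℝ := (ν₁ Set.univ).toReal with hlam1
  set lam2 : ℝ := (ν₂ Set.univ).toReal with hlam2
  have hmass1 : lam + lam1 = 1 := by
    have : μ₁ Set.univ = κ Set.univ + ν₁ Set.univ := by
      rw [h1]; rfl
    rw [measure_univ] at this
    rw [hlam, hlam1, ← ENNReal.toReal_add (measure_ne_top κ _) (measure_ne_top ν₁ _), ← this]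
    simp
  have hmass2 : lam + lam2 = 1 := by
    have : μ₂ Set.univ = κ Set.univ + ν₂ Set.univ := by
      rw [h2]; rfl
    rw [measure_univ] at this
    rw [hlam, hlam2, ← ENNReal.toReal_add (measure_ne_top κ _) (measure_ne_top ν₂ _), ← this]
    simp
  -- decompositions of integrals of g and g²
  have hg_dec1 : ∫ x, g x ∂μ₁ = ∫ x, g x ∂κ + ∫ x, g x ∂ν₁ := by
    rw [h1, integral_add_measure (ig1.mono_measure hκ1) (ig1.mono_measure hν1)]
  have hg_dec2 : ∫ x, g x ∂μ₂ = ∫ x, g x ∂κ + ∫ x, g x ∂ν₂ := by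
    rw [h2, integral_add_measure (ig2.mono_measure (h2 ▸ Measure.le_add_right le_rfl))
      (ig2.mono_measure hν2)]
  have hsq_dec1 : ∫ x, g x ^ 2 ∂μ₁ = ∫ x, g x ^ 2 ∂κ + ∫ x, g x ^ 2 ∂ν₁ := by
    rw [h1, integral_add_measure (isq1.mono_measure hκ1) (isq1.mono_measure hν1)]
  have hsq_dec2 : ∫ x, g x ^ 2 ∂μ₂ = ∫ x, g x ^ 2 ∂κ + ∫ x, g x ^ 2 ∂ν₂ := by
    rw [h2, integral_add_measure (isq2.mono_measure (h2 ▸ Measure.le_add_right le_rfl))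
      (isq2.mono_measure hν2)]
  -- integral of g under μᵢ
  have hgint1 : ∫ x, g x ∂μ₁ = m₁ - c := by
    rw [hgdef]
    rw [integral_sub if1 (integrable_const c), integral_const]
    simp [hm₁]
  have hgint2 : ∫ x, g x ∂μ₂ = m₂ - c := by
    rw [hgdef]
    rw [integral_sub if2 (integrable_const c), integral_const]
    simp [hm₂]
  -- integral of g² under μᵢ
  have hgsq1 : ∫ x, g x ^ 2 ∂μ₁ = ∫ x, f x ^ 2 ∂μ₁ - 2 * c * m₁ + c ^ 2 := by
    have h1' : ∀ x, g x ^ 2 = (f x ^ 2 - 2 * c * f x) + c ^ 2 := fun x => by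
      simp only [hgdef]; ring
    simp_rw [h1']
    have hint : Integrable (fun x => f x ^ 2 - 2 * c * f x) μ₁ :=
      hf1.integrable_sq.sub (if1.const_mul (2 * c))
    rw [integral_add hint (integrable_const _),
      integral_sub hf1.integrable_sq (if1.const_mul (2 * c)), integral_const_mul, integral_const]
    simp [hm₁]
  have hgsq2 : ∫ x, g x ^ 2 ∂μ₂ = ∫ x, f x ^ 2 ∂μ₂ - 2 * c * m₂ + c ^ 2 := by
    have h2' : ∀ x, g x ^ 2 = (f x ^ 2 - 2 * c * f x) + c ^ 2 := fun x => by
      simp only [hgdef]; ring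
    simp_rw [h2']
    have hint : Integrable (fun x => f x ^ 2 - 2 * c * f x) μ₂ :=
      hf2.integrable_sq.sub (if2.const_mul (2 * c))
    rw [integral_add hint (integrable_const _),
      integral_sub hf2.integrable_sq (if2.const_mul (2 * c)), integral_const_mul, integral_const]
    simp [hm₂]
  -- Cauchy–Schwarz on ν₁, ν₂
  have hCS1 : (∫ x, g x ∂ν₁) ^ 2 ≤ lam1 * ∫ x, g x ^ 2 ∂ν₁ :=
    hlam1 ▸ sq_integral_le_aux (ig1.mono_measure hν1) (isq1.mono_measure hν1)
  have hCS2 : (∫ x, g x ∂ν₂) ^ 2 ≤ lam2 * ∫ x, g x ^ 2 ∂ν₂ :=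
    hlam2 ▸ sq_integral_le_aux (ig2.mono_measure hν2) (isq2.mono_measure hν2)
  -- nonnegativity of ∫ g² dκ
  have hκsq : 0 ≤ ∫ x, g x ^ 2 ∂κ := integral_nonneg fun x => sq_nonneg _
  set u : ℝ := ∫ x, g x ∂ν₁
  set v : ℝ := ∫ x, g x ∂ν₂
  set w : ℝ := ∫ x, g x ∂κ
  have huv : w + u = m₁ - c := by rw [← hg_dec1, hgint1]
  have hvv : w + v = m₂ - c := by rw [← hg_dec2, hgint2]
  have hA1 : ∫ x, g x ^ 2 ∂ν₁ ≤ ∫ x, f x ^ 2 ∂μ₁ - 2 * c * m₁ + c ^ 2 := by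
    rw [← hgsq1, hsq_dec1]; linarith
  have hA2 : ∫ x, g x ^ 2 ∂ν₂ ≤ ∫ x, f x ^ 2 ∂μ₂ - 2 * c * m₂ + c ^ 2 := by
    rw [← hgsq2, hsq_dec2]; linarith
  have hlam1nn : 0 ≤ lam1 := ENNReal.toReal_nonneg
  have hlam2nn : 0 ≤ lam2 := ENNReal.toReal_nonneg
  have hc1 : ∫ x, f x ^ 2 ∂μ₁ - 2 * c * m₁ + c ^ 2
      = (∫ x, f x ^ 2 ∂μ₁ - m₁ ^ 2) + ((m₁ - m₂) / 2) ^ 2 := by rw [hcdef]; ring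
  have hc2 : ∫ x, f x ^ 2 ∂μ₂ - 2 * c * m₂ + c ^ 2
      = (∫ x, f x ^ 2 ∂μ₂ - m₂ ^ 2) + ((m₁ - m₂) / 2) ^ 2 := by rw [hcdef]; ring
  have hu : u ^ 2 ≤ lam1 * ((∫ x, f x ^ 2 ∂μ₁ - m₁ ^ 2) + ((m₁ - m₂) / 2) ^ 2) :=
    hCS1.trans (mul_le_mul_of_nonneg_left (hc1 ▸ hA1) hlam1nn)
  have hv : v ^ 2 ≤ lam2 * ((∫ x, f x ^ 2 ∂μ₂ - m₂ ^ 2) + ((m₁ - m₂) / 2) ^ 2) :=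
    hCS2.trans (mul_le_mul_of_nonneg_left (hc2 ▸ hA2) hlam2nn)
  have hd : u - v = m₁ - m₂ := by linarith [huv, hvv]
  have hdsq : (u - v) ^ 2 = (m₁ - m₂) ^ 2 := by rw [hd]
  have e1 : lam1 = 1 - lam := by linarith
  have e2 : lam2 = 1 - lam := by linarith
  rw [e1] at hu
  rw [e2] at hv
  have key : (m₁ - m₂) ^ 2 ≤ 2 * (1 - lam) * ((∫ x, f x ^ 2 ∂μ₁ - m₁ ^ 2)
      + (∫ x, f x ^ 2 ∂μ₂ - m₂ ^ 2)) + (1 - lam) * (m₁ - m₂) ^ 2 := by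
    calc (m₁ - m₂) ^ 2 = (u - v) ^ 2 := hdsq.symm
      _ ≤ 2 * u ^ 2 + 2 * v ^ 2 := sq_sub_le_aux u v
      _ ≤ 2 * ((1 - lam) * ((∫ x, f x ^ 2 ∂μ₁ - m₁ ^ 2) + ((m₁ - m₂) / 2) ^ 2))
          + 2 * ((1 - lam) * ((∫ x, f x ^ 2 ∂μ₂ - m₂ ^ 2) + ((m₁ - m₂) / 2) ^ 2)) := by
        linarith [hu, hv]
      _ = 2 * (1 - lam) * ((∫ x, f x ^ 2 ∂μ₁ - m₁ ^ 2) + (∫ x, f x ^ 2 ∂μ₂ - m₂ ^ 2))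
          + (1 - lam) * (m₁ - m₂) ^ 2 := by ring
  linarith [key]

lemma withDensity_finset_sum_aux {α ι : Type*} [MeasurableSpace α] (μ : Measure α)
    (s : Finset ι) (f : ι → α → ℝ≥0∞) (hf : ∀ i, Measurable (f i)) :
    μ.withDensity (fun x => ∑ i ∈ s, f i x) = ∑ i ∈ s, μ.withDensity (f i) := by
  classical
  induction s using Finset.induction with
  | empty => simp
  | insert i s hi ih =>
    rw [Finset.sum_insert hi,
      show (fun x => ∑ j ∈ insert i s, f j x) = f i + fun x => ∑ j ∈ s, f j x from
        funext fun x => Finset.sum_insert hi,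
      withDensity_add_left (hf i), ih]

set_option maxHeartbeats 1000000 in
/-- if the minimal pairwise overlap `Λ_m` of the swapped product
densities is positive, then for every mean-zero `f ∈ L2(μ_W)`,
`(Λ_m/(2 − Λ_m)) Var_{μ_W}(f) ≤ (1/|S_K|) ∑_σ Var_{μ_σ}(f)`. -/
theorem mixture_variance_lower_bound
    {Θ : Type*} [MeasurableSpace Θ] (K : ℕ) (hK : 1 ≤ K)
    (μpr : Measure Θ) [IsProbabilityMeasure μpr]
    (μprK : Measure (Fin K → Θ)) (hμprK : μprK = Measure.pi fun _ => μpr)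
    (πk : Fin K → Θ → ℝ≥0∞) (hπkm : ∀ k, Measurable (πk k))
    (hπkfin : ∀ k x, πk k x ≠ ∞) (hπkint : ∀ k, ∫⁻ x, πk k x ∂μpr = 1)
    (SK : Finset (Equiv.Perm (Fin K))) (hSKne : SK.Nonempty)
    (πσ : Equiv.Perm (Fin K) → (Fin K → Θ) → ℝ≥0∞)
    (hπσ : ∀ σ θ, πσ σ θ = ∏ k, πk (σ k) (θ k))
    (μσ : Equiv.Perm (Fin K) → Measure (Fin K → Θ))
    (hμσ : ∀ σ, μσ σ = μprK.withDensity (πσ σ))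
    (πW : (Fin K → Θ) → ℝ≥0∞)
    (hπW : ∀ θ, πW θ = (SK.card : ℝ≥0∞)⁻¹ * ∑ σ ∈ SK, πσ σ θ)
    (μW : Measure (Fin K → Θ)) (hμW : μW = μprK.withDensity πW)
    (Λm : ℝ)
    (hΛm : Λm = (SK ×ˢ SK).inf' (hSKne.product hSKne)
      (fun sr => (∫⁻ θ, min (πσ sr.1 θ) (πσ sr.2 θ) ∂μprK).toReal))
    (hΛpos : 0 < Λm) :
    ∀ f : (Fin K → Θ) → ℝ, MemLp f 2 μW → ∫ θ, f θ ∂μW = 0 →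
      Λm / (2 - Λm) * (∫ θ, f θ ^ 2 ∂μW - (∫ θ, f θ ∂μW) ^ 2) ≤
        (SK.card : ℝ)⁻¹ * ∑ σ ∈ SK,
          (∫ θ, f θ ^ 2 ∂(μσ σ) - (∫ θ, f θ ∂(μσ σ)) ^ 2) := by
  classical
  intro f hf hf0
  -- basic facts
  have hNpos : 0 < (SK.card : ℝ) := by exact_mod_cast Finset.card_pos.mpr hSKne
  have hN0 : (SK.card : ℝ≥0∞) ≠ 0 := by
    simpa using Finset.card_ne_zero_of_mem hSKne.choose_spec
  have hNtop : (SK.card : ℝ≥0∞) ≠ ∞ := ENNReal.natCast_ne_top _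
  have hΘ : Nonempty Θ := by
    by_contra h
    rw [not_nonempty_iff] at h
    have h1 : μpr Set.univ = 1 := measure_univ
    rw [Set.univ_eq_empty_iff.mpr h, measure_empty] at h1
    exact zero_ne_one h1
  haveI : Nonempty (Fin K → Θ) := ⟨fun _ => Classical.arbitrary Θ⟩
  -- measurability of densities
  have hπσm : ∀ σ, Measurable (πσ σ) := by
    intro σ
    have : πσ σ = fun θ => ∏ k, πk (σ k) (θ k) := funext (hπσ σ)
    rw [this]
    exact Finset.measurable_prod _ fun k _ => (hπkm (σ k)).comp (measurable_pi_apply k)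
  -- total mass of each density
  have hπσ1 : ∀ σ, ∫⁻ θ, πσ σ θ ∂μprK = 1 := by
    intro σ
    simp_rw [hπσ, hμprK]
    rw [lintegral_pi_prod_aux _ _ fun k => hπkm (σ k)]
    simp [hπkint]
  have hPσ : ∀ σ, IsProbabilityMeasure (μσ σ) := by
    intro σ
    constructor
    rw [hμσ, withDensity_apply _ MeasurableSet.univ, setLIntegral_univ, hπσ1]
  -- μW as an average of the μσ
  have hμWsum : (SK.card : ℝ≥0∞) • μW = ∑ σ ∈ SK, μσ σ := by
    have h1 : πW = (SK.card : ℝ≥0∞)⁻¹ • fun θ => ∑ σ ∈ SK, πσ σ θ := funext fun θ => by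
      rw [hπW]; rfl
    have h2 : μprK.withDensity (fun θ => ∑ σ ∈ SK, πσ σ θ) = ∑ σ ∈ SK, μσ σ := by
      rw [withDensity_finset_sum_aux _ _ _ hπσm]
      exact Finset.sum_congr rfl fun σ _ => (hμσ σ).symm
    rw [hμW, h1, withDensity_smul' _ _ (by simp [hN0]), h2, smul_smul,
      ENNReal.mul_inv_cancel hN0 hNtop, one_smul]
  -- f is in L2 of each μσ
  have hμσle : ∀ σ ∈ SK, μσ σ ≤ (SK.card : ℝ≥0∞) • μW := by
    intro σ hσ
    rw [hμWsum]
    intro s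
    rw [Measure.finset_sum_apply]
    exact Finset.single_le_sum (f := fun ρ => μσ ρ s) (fun ρ _ => zero_le) hσ
  have hfσ : ∀ σ ∈ SK, MemLp f 2 (μσ σ) := fun σ hσ =>
    (hf.smul_measure hNtop).mono_measure (hμσle σ hσ)
  have hint : ∀ σ ∈ SK, Integrable f (μσ σ) := fun σ hσ => by
    haveI := hPσ σ; exact (hfσ σ hσ).integrable one_le_two
  have hintsq : ∀ σ ∈ SK, Integrable (fun θ => f θ ^ 2) (μσ σ) := fun σ hσ =>
    (hfσ σ hσ).integrable_sq
  -- sums of means and second moments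
  have hmean : ∑ σ ∈ SK, ∫ θ, f θ ∂μσ σ = 0 := by
    have h1 : ∫ θ, f θ ∂((SK.card : ℝ≥0∞) • μW) = ∑ σ ∈ SK, ∫ θ, f θ ∂μσ σ := by
      rw [hμWsum]; exact integral_finset_sum_measure hint
    rw [integral_smul_measure, hf0, smul_zero] at h1
    exact h1.symm
  have hsq : ∑ σ ∈ SK, ∫ θ, f θ ^ 2 ∂μσ σ = (SK.card : ℝ) * ∫ θ, f θ ^ 2 ∂μW := by
    have h1 : ∫ θ, f θ ^ 2 ∂((SK.card : ℝ≥0∞) • μW) = ∑ σ ∈ SK, ∫ θ, f θ ^ 2 ∂μσ σ := by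
      rw [hμWsum]; exact integral_finset_sum_measure hintsq
    rw [integral_smul_measure] at h1
    rw [← h1]
    simp [smul_eq_mul]
  -- nonnegativity of the variances
  have hVnn : ∀ σ ∈ SK, 0 ≤ ∫ θ, f θ ^ 2 ∂μσ σ - (∫ θ, f θ ∂μσ σ) ^ 2 := by
    intro σ hσ
    haveI := hPσ σ
    have := sq_integral_le_aux (hint σ hσ) (hintsq σ hσ)
    rw [measure_univ] at this
    simp at this
    linarith
  -- Λm ≤ 1
  have hΛ1 : Λm ≤ 1 := by
    obtain ⟨σ₀, hσ₀⟩ := hSKne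
    have h := Finset.inf'_le (b := (σ₀, σ₀))
      (fun sr : Equiv.Perm (Fin K) × Equiv.Perm (Fin K) =>
        (∫⁻ θ, min (πσ sr.1 θ) (πσ sr.2 θ) ∂μprK).toReal)
      (Finset.mem_product.mpr ⟨hσ₀, hσ₀⟩)
    rw [← hΛm] at h
    refine h.trans ?_
    simp only [min_self, hπσ1 σ₀]
    simp
  -- pairwise bound
  have hpair : ∀ σ ∈ SK, ∀ ρ ∈ SK,
      Λm * ((∫ θ, f θ ∂μσ σ) - ∫ θ, f θ ∂μσ ρ) ^ 2 ≤
        2 * (1 - Λm) * ((∫ θ, f θ ^ 2 ∂μσ σ - (∫ θ, f θ ∂μσ σ) ^ 2)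
          + (∫ θ, f θ ^ 2 ∂μσ ρ - (∫ θ, f θ ∂μσ ρ) ^ 2)) := by
    intro σ hσ ρ hρ
    haveI := hPσ σ; haveI := hPσ ρ
    set q : (Fin K → Θ) → ℝ≥0∞ := fun θ => min (πσ σ θ) (πσ ρ θ) with hq
    have hqm : Measurable q := (hπσm σ).min (hπσm ρ)
    have hdec1 : μσ σ = μprK.withDensity q + μprK.withDensity (fun θ => πσ σ θ - q θ) := by
      rw [← withDensity_add_left hqm, hμσ]
      congr 1
      funext θ
      exact (add_tsub_cancel_of_le (min_le_left _ _)).symm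
    have hdec2 : μσ ρ = μprK.withDensity q + μprK.withDensity (fun θ => πσ ρ θ - q θ) := by
      rw [← withDensity_add_left hqm, hμσ]
      congr 1
      funext θ
      exact (add_tsub_cancel_of_le (min_le_right _ _)).symm
    set lam : ℝ := (∫⁻ θ, min (πσ σ θ) (πσ ρ θ) ∂μprK).toReal with hlamdef
    have hκu : lam = ((μprK.withDensity q) Set.univ).toReal := by
      rw [withDensity_apply _ MeasurableSet.univ, setLIntegral_univ]
    have hb := pair_bound_aux hdec1 hdec2 (hfσ σ hσ) (hfσ ρ hρ) hκu
    have hΛle : Λm ≤ lam := by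
      have h := Finset.inf'_le (b := (σ, ρ))
        (fun sr : Equiv.Perm (Fin K) × Equiv.Perm (Fin K) =>
          (∫⁻ θ, min (πσ sr.1 θ) (πσ sr.2 θ) ∂μprK).toReal)
        (Finset.mem_product.mpr ⟨hσ, hρ⟩)
      rw [← hΛm] at h
      exact h
    have hVsum : 0 ≤ (∫ θ, f θ ^ 2 ∂μσ σ - (∫ θ, f θ ∂μσ σ) ^ 2)
        + (∫ θ, f θ ^ 2 ∂μσ ρ - (∫ θ, f θ ∂μσ ρ) ^ 2) := by
      have := hVnn σ hσ; have := hVnn ρ hρ; linarith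
    calc Λm * ((∫ θ, f θ ∂μσ σ) - ∫ θ, f θ ∂μσ ρ) ^ 2
        ≤ lam * ((∫ θ, f θ ∂μσ σ) - ∫ θ, f θ ∂μσ ρ) ^ 2 :=
          mul_le_mul_of_nonneg_right hΛle (sq_nonneg _)
      _ ≤ 2 * (1 - lam) * ((∫ θ, f θ ^ 2 ∂μσ σ - (∫ θ, f θ ∂μσ σ) ^ 2)
          + (∫ θ, f θ ^ 2 ∂μσ ρ - (∫ θ, f θ ∂μσ ρ) ^ 2)) := hb
      _ ≤ 2 * (1 - Λm) * ((∫ θ, f θ ^ 2 ∂μσ σ - (∫ θ, f θ ∂μσ σ) ^ 2)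
          + (∫ θ, f θ ^ 2 ∂μσ ρ - (∫ θ, f θ ∂μσ ρ) ^ 2)) :=
          mul_le_mul_of_nonneg_right (by linarith) hVsum
  -- summing the pairwise bounds
  set m : Equiv.Perm (Fin K) → ℝ := fun σ => ∫ θ, f θ ∂μσ σ with hm
  set S : Equiv.Perm (Fin K) → ℝ := fun σ => ∫ θ, f θ ^ 2 ∂μσ σ with hS
  have hmean' : ∑ σ ∈ SK, m σ = 0 := hmean
  have hsq' : ∑ σ ∈ SK, S σ = (SK.card : ℝ) * ∫ θ, f θ ^ 2 ∂μW := hsq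
  have hVnn' : ∀ σ ∈ SK, 0 ≤ S σ - m σ ^ 2 := hVnn
  have hpair' : ∀ σ ∈ SK, ∀ ρ ∈ SK,
      Λm * (m σ - m ρ) ^ 2 ≤ 2 * (1 - Λm) * ((S σ - m σ ^ 2) + (S ρ - m ρ ^ 2)) := hpair
  have hdouble : ∑ σ ∈ SK, ∑ ρ ∈ SK, Λm * (m σ - m ρ) ^ 2 ≤
      ∑ σ ∈ SK, ∑ ρ ∈ SK, 2 * (1 - Λm) * ((S σ - m σ ^ 2) + (S ρ - m ρ ^ 2)) :=
    Finset.sum_le_sum fun σ hσ => Finset.sum_le_sum fun ρ hρ => hpair' σ hσ ρ hρ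
  have hinner : ∀ σ, ∑ ρ ∈ SK, (m σ - m ρ) ^ 2
      = (SK.card : ℝ) * m σ ^ 2 - 2 * m σ * ∑ ρ ∈ SK, m ρ + ∑ ρ ∈ SK, m ρ ^ 2 := by
    intro σ
    have expand : ∀ ρ, (m σ - m ρ) ^ 2 = m σ ^ 2 - 2 * m σ * m ρ + m ρ ^ 2 := fun ρ => by ring
    rw [Finset.sum_congr rfl fun ρ _ => expand ρ, Finset.sum_add_distrib,
      Finset.sum_sub_distrib, Finset.sum_const, nsmul_eq_mul, ← Finset.mul_sum]
  have hinner0 : ∀ σ, ∑ ρ ∈ SK, (m σ - m ρ) ^ 2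
      = (SK.card : ℝ) * m σ ^ 2 + ∑ ρ ∈ SK, m ρ ^ 2 := by
    intro σ
    rw [hinner σ, hmean']
    ring
  have hLHS : ∑ σ ∈ SK, ∑ ρ ∈ SK, Λm * (m σ - m ρ) ^ 2
      = (2 * (SK.card : ℝ)) * (Λm * ∑ σ ∈ SK, m σ ^ 2) := by
    simp_rw [← Finset.mul_sum]
    rw [Finset.sum_congr rfl fun σ _ => hinner0 σ, Finset.sum_add_distrib,
      Finset.sum_const, nsmul_eq_mul, ← Finset.mul_sum]
    ring
  have hRHS : ∑ σ ∈ SK, ∑ ρ ∈ SK, 2 * (1 - Λm) * ((S σ - m σ ^ 2) + (S ρ - m ρ ^ 2))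
      = (2 * (SK.card : ℝ)) * (2 * (1 - Λm) * ∑ σ ∈ SK, (S σ - m σ ^ 2)) := by
    simp_rw [← Finset.mul_sum]
    have hin : ∀ σ, ∑ ρ ∈ SK, ((S σ - m σ ^ 2) + (S ρ - m ρ ^ 2))
        = (SK.card : ℝ) * (S σ - m σ ^ 2) + ∑ ρ ∈ SK, (S ρ - m ρ ^ 2) := by
      intro σ
      rw [Finset.sum_add_distrib, Finset.sum_const, nsmul_eq_mul]
    rw [Finset.sum_congr rfl fun σ _ => hin σ, Finset.sum_add_distrib,
      Finset.sum_const, nsmul_eq_mul, ← Finset.mul_sum]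
    ring
  have hkey : Λm * ∑ σ ∈ SK, m σ ^ 2 ≤ 2 * (1 - Λm) * ∑ σ ∈ SK, (S σ - m σ ^ 2) := by
    have h := hdouble
    rw [hLHS, hRHS] at h
    exact le_of_mul_le_mul_left h (by linarith)
  -- conclusion
  have e2 : ∫ θ, f θ ^ 2 ∂μW = (SK.card : ℝ)⁻¹ * ∑ σ ∈ SK, S σ := by
    rw [hsq', ← mul_assoc, inv_mul_cancel₀ (ne_of_gt hNpos), one_mul]
  have hsplit : ∑ σ ∈ SK, S σ = ∑ σ ∈ SK, (S σ - m σ ^ 2) + ∑ σ ∈ SK, m σ ^ 2 := by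
    rw [← Finset.sum_add_distrib]
    exact Finset.sum_congr rfl fun σ _ => by ring
  have h2Λ : (0:ℝ) < 2 - Λm := by linarith
  have final : Λm / (2 - Λm) * (∫ θ, f θ ^ 2 ∂μW - (∫ θ, f θ ∂μW) ^ 2) ≤
      (SK.card : ℝ)⁻¹ * ∑ σ ∈ SK, (S σ - m σ ^ 2) := by
    rw [hf0, e2, hsplit, div_mul_eq_mul_div, div_le_iff₀ h2Λ]
    have hinv : (0:ℝ) ≤ (SK.card : ℝ)⁻¹ := inv_nonneg.mpr hNpos.le
    have hkey2 := mul_le_mul_of_nonneg_left hkey hinv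
    nlinarith [hkey2]
  exact final
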